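/- (Trivial LCM oscillators) Let f be an oscillator of period n and g an oscillator of period m in Conway's Game of Life. Then there exists a translation vector v ∈ ℤ × ℤ such that the configuration h defined by h c = (f c || g (c - v)) is an oscillator of period lcm(n, m); that is, two oscillators can be placed far enough apart that their disjoint union is an oscillator whose period is the least common multiple of their periods. -/

import Mathlib

/-- The 8 neighbours of a cell: cells at Chebyshev distance 1. -/
noncomputable def neighbours (c : ℤ × ℤ) : Finset (ℤ × ℤ) :=
  (Finset.Icc (c.1 - 1) (c.1 + 1) ×ˢ Finset.Icc (c.2 - 1) (c.2 + 1)).erase c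

/-- Number of live neighbours of `c` in configuration `f`. -/
noncomputable def liveNeighbours (f : ℤ × ℤ → Bool) (c : ℤ × ℤ) : ℕ :=
  ((neighbours c).filter (fun d => f d = true)).card

/-- One step of Conway's Game of Life: a cell is alive iff it has exactly 3
live neighbours, or it is alive and has exactly 2 live neighbours. -/
noncomputable def lifeStep (f : ℤ × ℤ → Bool) : ℤ × ℤ → Bool := fun c =>
  (liveNeighbours f c == 3) || (f c && (liveNeighbours f c == 2))

/-- The support of a configuration: the set of live cells. -/
def support (f : ℤ × ℤ → Bool) : Set (ℤ × ℤ) := {c | f c = true}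

/-- An oscillator of period `p`: finite nonempty support, `L^[p] f = f`,
and `L^[q] f ≠ f` for all `0 < q < p`. -/
def IsOscillator (p : ℕ) (f : ℤ × ℤ → Bool) : Prop :=
  (support f).Finite ∧ (support f).Nonempty ∧
    lifeStep^[p] f = f ∧ ∀ q : ℕ, 0 < q → q < p → lifeStep^[q] f ≠ f

lemma mem_neighbours {d c : ℤ × ℤ} :
    d ∈ neighbours c ↔ ¬(d.1 = c.1 ∧ d.2 = c.2) ∧
      c.1 - 1 ≤ d.1 ∧ d.1 ≤ c.1 + 1 ∧ c.2 - 1 ≤ d.2 ∧ d.2 ≤ c.2 + 1 := by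
  simp only [neighbours, Finset.mem_erase, Finset.mem_product, Finset.mem_Icc, ne_eq,
    Prod.ext_iff]
  tauto

lemma neighbours_comm {d c : ℤ × ℤ} : d ∈ neighbours c ↔ c ∈ neighbours d := by
  simp only [mem_neighbours]; omega

lemma mem_neighbours_sub {d c v : ℤ × ℤ} : d ∈ neighbours (c - v) ↔ d + v ∈ neighbours c := by
  simp only [mem_neighbours, Prod.fst_sub, Prod.snd_sub, Prod.fst_add, Prod.snd_add]
  omega

lemma liveNeighbours_zero {f : ℤ × ℤ → Bool} {c : ℤ × ℤ}
    (h : ∀ d ∈ neighbours c, f d = false) : liveNeighbours f c = 0 := by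
  rw [liveNeighbours, Finset.card_eq_zero, Finset.filter_eq_empty_iff]
  intro d hd; simp [h d hd]

lemma lifeStep_false {f : ℤ × ℤ → Bool} {c : ℤ × ℤ} (h0 : f c = false)
    (h : ∀ d ∈ neighbours c, f d = false) : lifeStep f c = false := by
  simp [lifeStep, liveNeighbours_zero h, h0]

lemma lifeStep_union {f g : ℤ × ℤ → Bool}
    (H : ∀ c : ℤ × ℤ, (f c = false ∧ ∀ d ∈ neighbours c, f d = false) ∨
                      (g c = false ∧ ∀ d ∈ neighbours c, g d = false)) :
    lifeStep (fun x => f x || g x) = fun x => lifeStep f x || lifeStep g x := by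
  funext c
  rcases H c with ⟨h0, h⟩ | ⟨h0, h⟩
  · have hln : liveNeighbours (fun x => f x || g x) c = liveNeighbours g c := by
      rw [liveNeighbours, liveNeighbours]
      congr 1
      apply Finset.filter_congr
      intro d hd; simp [h d hd]
    simp [lifeStep, hln, liveNeighbours_zero h, h0]
  · have hln : liveNeighbours (fun x => f x || g x) c = liveNeighbours f c := by
      rw [liveNeighbours, liveNeighbours]
      congr 1
      apply Finset.filter_congr
      intro d hd; simp [h d hd]
    simp [lifeStep, hln, liveNeighbours_zero h, h0]

def shiftCfg (v : ℤ × ℤ) (f : ℤ × ℤ → Bool) : ℤ × ℤ → Bool := fun c => f (c - v)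

lemma liveNeighbours_shift (v : ℤ × ℤ) (f : ℤ × ℤ → Bool) (c : ℤ × ℤ) :
    liveNeighbours (shiftCfg v f) c = liveNeighbours f (c - v) := by
  rw [liveNeighbours, liveNeighbours]
  apply Finset.card_bij' (fun d _ => d - v) (fun d _ => d + v)
  · intro a ha
    simp only [Finset.mem_filter] at ha ⊢
    refine ⟨mem_neighbours_sub.2 (by simpa using ha.1), ?_⟩
    simpa [shiftCfg] using ha.2
  · intro a ha
    simp only [Finset.mem_filter] at ha ⊢
    refine ⟨?_, ?_⟩
    · have := mem_neighbours_sub.1 ha.1; simpa using this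
    · simpa [shiftCfg] using ha.2
  · intro a _; simp
  · intro a _; simp

lemma lifeStep_shift (v : ℤ × ℤ) (f : ℤ × ℤ → Bool) :
    lifeStep (shiftCfg v f) = shiftCfg v (lifeStep f) := by
  funext c
  simp [lifeStep, shiftCfg, liveNeighbours_shift]

lemma iterate_shift (v : ℤ × ℤ) (f : ℤ × ℤ → Bool) (k : ℕ) :
    lifeStep^[k] (shiftCfg v f) = shiftCfg v (lifeStep^[k] f) := by
  induction k with
  | zero => rfl
  | succ k ih => rw [Function.iterate_succ_apply', Function.iterate_succ_apply', ih,
      lifeStep_shift]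

lemma support_lifeStep_subset (f : ℤ × ℤ → Bool) :
    support (lifeStep f) ⊆ ⋃ d ∈ support f, (neighbours d : Set (ℤ × ℤ)) := by
  intro c hc
  have hne : liveNeighbours f c ≠ 0 := by
    intro h0
    simp [support, lifeStep, h0] at hc
  obtain ⟨d, hd⟩ : ∃ d ∈ neighbours c, f d = true := by
    by_contra h
    push_neg at h
    apply hne
    rw [liveNeighbours, Finset.card_eq_zero, Finset.filter_eq_empty_iff]
    intro d hdm
    simp [h d hdm]
  exact Set.mem_biUnion hd.2 (neighbours_comm.1 hd.1)

lemma support_iterate_finite {f : ℤ × ℤ → Bool} (hf : (support f).Finite) (k : ℕ) :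
    (support (lifeStep^[k] f)).Finite := by
  induction k with
  | zero => exact hf
  | succ k ih =>
    rw [Function.iterate_succ_apply']
    exact (Set.Finite.biUnion ih (fun d _ => (neighbours d).finite_toSet)).subset
      (support_lifeStep_subset _)

lemma iterate_mod {f : ℤ × ℤ → Bool} {n : ℕ} (hp : lifeStep^[n] f = f) (k : ℕ) :
    lifeStep^[k] f = lifeStep^[k % n] f := by
  conv_lhs => rw [← Nat.mod_add_div k n]
  rw [Function.iterate_add_apply, Function.iterate_mul, Function.iterate_fixed hp]


lemma support_union_eq (f g : ℤ × ℤ → Bool) :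
    support (fun c => f c || g c) = support f ∪ support g := by
  ext c; simp [support]

lemma support_shift_finite {g : ℤ × ℤ → Bool} (hg : (support g).Finite) (v : ℤ × ℤ) :
    (support (shiftCfg v g)).Finite := by
  have : support (shiftCfg v g) = (fun c => c + v) '' support g := by
    ext c
    constructor
    · intro hc; exact ⟨c - v, hc, by simp⟩
    · rintro ⟨d, hd, rfl⟩; simpa [support, shiftCfg] using hd
  rw [this]
  exact hg.image _


/-- Trivial LCM oscillators: two oscillators can be placed far enough apart that
their disjoint union is an oscillator of period `lcm n m`. -/
theorem lcm_oscillator (n m : ℕ) (f g : ℤ × ℤ → Bool)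
    (hf : IsOscillator n f) (hg : IsOscillator m g) :
    ∃ v : ℤ × ℤ, IsOscillator (Nat.lcm n m) (fun c => f c || g (c - v)) := by
  obtain ⟨hffin, hfne, hfp, hfmin⟩ := hf
  obtain ⟨hgfin, hgne, hgp, hgmin⟩ := hg
  rcases Nat.eq_zero_or_pos n with hn | hn
  · have hl0 : Nat.lcm n m = 0 := by simp [hn, Nat.lcm]
    refine ⟨0, ?_, ?_, ?_, ?_⟩
    · rw [show (fun c : ℤ × ℤ => f c || g (c - 0)) = fun c => f c || shiftCfg 0 g c from rfl,
        support_union_eq]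
      exact hffin.union (support_shift_finite hgfin 0)
    · obtain ⟨c, hc⟩ := hfne
      exact ⟨c, by simp [support] at hc ⊢; simp [hc]⟩
    · rw [hl0, Function.iterate_zero_apply]
    · intro q hq hq'
      omega
  rcases Nat.eq_zero_or_pos m with hm | hm
  · have hl0 : Nat.lcm n m = 0 := by simp [hm, Nat.lcm]
    refine ⟨0, ?_, ?_, ?_, ?_⟩
    · rw [show (fun c : ℤ × ℤ => f c || g (c - 0)) = fun c => f c || shiftCfg 0 g c from rfl,
        support_union_eq]
      exact hffin.union (support_shift_finite hgfin 0)
    · obtain ⟨c, hc⟩ := hfne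
      exact ⟨c, by simp [support] at hc ⊢; simp [hc]⟩
    · rw [hl0, Function.iterate_zero_apply]
    · intro q hq hq'
      omega
  -- main case
  set Uf : Set (ℤ × ℤ) := ⋃ k ∈ Set.Iio n, support (lifeStep^[k] f) with hUf
  set Ug : Set (ℤ × ℤ) := ⋃ k ∈ Set.Iio m, support (lifeStep^[k] g) with hUg
  have hUffin : Uf.Finite :=
    Set.Finite.biUnion (Set.finite_Iio n) (fun k _ => support_iterate_finite hffin k)
  have hUgfin : Ug.Finite :=
    Set.Finite.biUnion (Set.finite_Iio m) (fun k _ => support_iterate_finite hgfin k)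
  obtain ⟨A, hA⟩ := (hUffin.image Prod.fst).bddAbove
  obtain ⟨B, hB⟩ := (hUgfin.image Prod.fst).bddBelow
  simp only [mem_upperBounds, Set.mem_image, forall_exists_index, and_imp] at hA
  simp only [mem_lowerBounds, Set.mem_image, forall_exists_index, and_imp] at hB
  set v : ℤ × ℤ := (A + 3 - B, 0) with hv
  refine ⟨v, ?_⟩
  have Hf : ∀ k : ℕ, ∀ c : ℤ × ℤ, lifeStep^[k] f c = true → c.1 ≤ A := by
    intro k c hc
    rw [iterate_mod hfp] at hc
    refine hA _ c (Set.mem_biUnion (Nat.mod_lt k hn : k % n ∈ Set.Iio n) hc) rfl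
  have Hg : ∀ k : ℕ, ∀ c : ℤ × ℤ, lifeStep^[k] (shiftCfg v g) c = true → A + 3 ≤ c.1 := by
    intro k c hc
    rw [iterate_shift, iterate_mod hgp] at hc
    have : (c - v).1 ∈ Prod.fst '' Ug := ⟨c - v,
      Set.mem_biUnion (Nat.mod_lt k hm : k % m ∈ Set.Iio m) hc, rfl⟩
    have hBc := hB _ (c - v) (Set.mem_biUnion (Nat.mod_lt k hm : k % m ∈ Set.Iio m) hc) rfl
    simp only [Prod.fst_sub, hv] at hBc
    omega
  have key : ∀ k : ℕ, lifeStep^[k] (fun c => f c || shiftCfg v g c) =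
      fun c => lifeStep^[k] f c || lifeStep^[k] (shiftCfg v g) c := by
    intro k
    induction k with
    | zero => rfl
    | succ k ih =>
      rw [Function.iterate_succ_apply', ih, Function.iterate_succ_apply',
        Function.iterate_succ_apply']
      apply lifeStep_union
      intro c
      rcases le_or_gt c.1 (A + 1) with hc | hc
      · right
        constructor
        · rcases Or.symm (Bool.eq_false_or_eq_true (lifeStep^[k] (shiftCfg v g) c)) with h | h
          · exact h
          · exact absurd (Hg k c h) (by omega)
        · intro d hd
          rcases Or.symm (Bool.eq_false_or_eq_true (lifeStep^[k] (shiftCfg v g) d)) with h | h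
          · exact h
          · have := Hg k d h
            have := (mem_neighbours.1 hd).2.2.1
            omega
      · left
        constructor
        · rcases Or.symm (Bool.eq_false_or_eq_true (lifeStep^[k] f c)) with h | h
          · exact h
          · exact absurd (Hf k c h) (by omega)
        · intro d hd
          rcases Or.symm (Bool.eq_false_or_eq_true (lifeStep^[k] f d)) with h | h
          · exact h
          · have := Hf k d h
            have := (mem_neighbours.1 hd).2.1
            omega
  have hshift : (fun c : ℤ × ℤ => f c || g (c - v)) = fun c => f c || shiftCfg v g c := rfl
  rw [hshift]
  refine ⟨?_, ?_, ?_, ?_⟩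
  · rw [support_union_eq]
    exact hffin.union (support_shift_finite hgfin v)
  · obtain ⟨c, hc⟩ := hfne
    exact ⟨c, by simp [support] at hc ⊢; simp [hc]⟩
  · have hln : Nat.lcm n m % n = 0 := Nat.mod_eq_zero_of_dvd (Nat.dvd_lcm_left n m)
    have hlm : Nat.lcm n m % m = 0 := Nat.mod_eq_zero_of_dvd (Nat.dvd_lcm_right n m)
    have h1 : lifeStep^[Nat.lcm n m] f = f := by
      rw [iterate_mod hfp, hln, Function.iterate_zero_apply]
    have h2 : lifeStep^[Nat.lcm n m] (shiftCfg v g) = shiftCfg v g := by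
      rw [iterate_shift, iterate_mod hgp, hlm, Function.iterate_zero_apply]
    rw [key, h1, h2]
  · intro q hq0 hqlt heq
    rw [key] at heq
    have heq' : ∀ c : ℤ × ℤ, (lifeStep^[q] f c || lifeStep^[q] (shiftCfg v g) c) =
        (f c || shiftCfg v g c) := fun c => congrFun heq c
    have hFdead : ∀ c : ℤ × ℤ, A < c.1 → f c = false ∧ lifeStep^[q] f c = false := by
      intro c hc
      constructor
      · rcases Or.symm (Bool.eq_false_or_eq_true (f c)) with h | h
        · exact h
        · have := Hf 0 c (by simpa using h); omega
      · rcases Or.symm (Bool.eq_false_or_eq_true (lifeStep^[q] f c)) with h | h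
        · exact h
        · have := Hf q c h; omega
    have hGdead : ∀ c : ℤ × ℤ, c.1 < A + 3 →
        shiftCfg v g c = false ∧ lifeStep^[q] (shiftCfg v g) c = false := by
      intro c hc
      constructor
      · rcases Or.symm (Bool.eq_false_or_eq_true (shiftCfg v g c)) with h | h
        · exact h
        · have := Hg 0 c (by simpa using h); omega
      · rcases Or.symm (Bool.eq_false_or_eq_true (lifeStep^[q] (shiftCfg v g) c)) with h | h
        · exact h
        · have := Hg q c h; omega
    have hfq : lifeStep^[q] f = f := by
      funext c
      rcases le_or_gt c.1 A with hc | hc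
      · have hg1 := hGdead c (by omega)
        have := heq' c
        rw [hg1.1, hg1.2] at this
        simpa using this
      · have h1 := hFdead c hc
        rw [h1.1, h1.2]
    have hgq : lifeStep^[q] g = g := by
      have hgvq : lifeStep^[q] (shiftCfg v g) = shiftCfg v g := by
        funext c
        rcases le_or_gt c.1 A with hc | hc
        · have hg1 := hGdead c (by omega)
          rw [hg1.1, hg1.2]
        · have h1 := hFdead c hc
          have := heq' c
          rw [h1.1, h1.2] at this
          simpa using this
      rw [iterate_shift] at hgvq
      funext c
      have := congrFun hgvq (c + v)
      simpa [shiftCfg] using this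
    have hdn : n ∣ q := by
      rcases Nat.eq_zero_or_pos (q % n) with h | h
      · exact Nat.dvd_of_mod_eq_zero h
      · exact absurd ((iterate_mod hfp q).symm.trans hfq)
          (hfmin (q % n) h (Nat.mod_lt q hn))
    have hdm : m ∣ q := by
      rcases Nat.eq_zero_or_pos (q % m) with h | h
      · exact Nat.dvd_of_mod_eq_zero h
      · exact absurd ((iterate_mod hgp q).symm.trans hgq)
          (hgmin (q % m) h (Nat.mod_lt q hm))
    have : Nat.lcm n m ∣ q := Nat.lcm_dvd hdn hdm
    have := Nat.le_of_dvd hq0 this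
    omega
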